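/- Let ψ : ∂D_a → ℂ be continuous with |ψ| = 1 and winding number deg(ψ,a) = 2n+1 odd. Let ψ̃ be the (symmetric) lift of ψ to the boundary of the double cover Σ_a of D_a. Then ψ̃ has winding number 2(2n+1), there exists a continuous antisymmetric function ψ^{1/2} on ∂Σ_a with (ψ^{1/2})² = ψ̃, and for any Γ : ∂D → ℂ satisfying Γ = ψ Γ̄, the lifted function ψ^{-1/2}·Γ̃ is real-valued and antisymmetric on ∂Σ_a. -/

import Mathlib

open Metric Complex

/-- The boundary of the double cover Σ_a = {(x,y) : y² = x-a} of the punctured disk: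
points with y² = x - a and |x| = 1. -/
def bdrySigma (a : ℂ) : Set (ℂ × ℂ) :=
  {p : ℂ × ℂ | p.2 ^ 2 = p.1 - a ∧ ‖p.1‖ = 1}

/-- Let ψ be continuous on ∂D with |ψ| = 1 and winding number 2n+1 (odd), and let γ be
a parametrization of ∂Σ_a doubly covering ∂D (γ(t+1) = G(γ t) for the deck map
G(x,y) = (x,-y), with x-projection exp(2πit)). Then: the symmetric lift ψ̃ = ψ∘Π_x has
winding number 2(2n+1) along γ; there exists a continuous antisymmetric square root
ψ^{1/2} of ψ̃ on ∂Σ_a; and for any Γ with Γ = ψΓ̄ on ∂D, the function ψ^{-1/2}·Γ̃ is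
real valued and antisymmetric on ∂Σ_a. -/
theorem half_integer_square_root (a : ℂ) (ha : a ∈ ball (0 : ℂ) 1) (n : ℤ)
    (ψ : ℂ → ℂ) (hψc : ContinuousOn ψ (sphere (0 : ℂ) 1))
    (hψ1 : ∀ x ∈ sphere (0 : ℂ) 1, ‖ψ x‖ = 1)
    (hdeg : ∃ h : ℝ → ℝ, Continuous h ∧
      (∀ t : ℝ, ψ (Complex.exp (2 * Real.pi * Complex.I * t)) = Complex.exp (Complex.I * h t)) ∧
      h 1 - h 0 = 2 * Real.pi * (2 * n + 1))
    (γ : ℝ → ℂ × ℂ) (hγc : Continuous γ) (hγS : ∀ t, γ t ∈ bdrySigma a)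
    (hγdeck : ∀ t, γ (t + 1) = ((γ t).1, -(γ t).2))
    (hγproj : ∀ t, (γ t).1 = Complex.exp (2 * Real.pi * Complex.I * t)) :
    (∃ H : ℝ → ℝ, Continuous H ∧
      (∀ t : ℝ, ψ ((γ t).1) = Complex.exp (Complex.I * H t)) ∧
      H 2 - H 0 = 2 * Real.pi * (2 * (2 * n + 1))) ∧
    ∃ s : ℂ × ℂ → ℂ, ContinuousOn s (bdrySigma a) ∧
      (∀ p ∈ bdrySigma a, (s p) ^ 2 = ψ p.1) ∧
      (∀ p ∈ bdrySigma a, s (p.1, -p.2) = -s p) ∧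
      (∀ Γ : ℂ → ℂ, (∀ x ∈ sphere (0 : ℂ) 1, Γ x = ψ x * (starRingEnd ℂ) (Γ x)) →
        ∀ p ∈ bdrySigma a,
          ((s p)⁻¹ * Γ p.1).im = 0 ∧
          (s (p.1, -p.2))⁻¹ * Γ p.1 = -((s p)⁻¹ * Γ p.1)) := by
  obtain ⟨h, hhc, hval, hΔ⟩ := hdeg
  have hπ : (0:ℝ) < Real.pi := Real.pi_pos
  have ha' : ‖a‖ < 1 := by simpa [mem_ball, dist_eq_norm] using ha
  have hπc : (Real.pi : ℂ) ≠ 0 := by exact_mod_cast Real.pi_ne_zero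
  -- periodicity of exp
  have hexp1 : ∀ t : ℝ, Complex.exp (2 * Real.pi * Complex.I * ((t : ℂ) + 1))
      = Complex.exp (2 * Real.pi * Complex.I * t) := by
    intro t
    rw [show 2 * (Real.pi:ℂ) * Complex.I * ((t:ℂ)+1)
        = 2 * Real.pi * Complex.I * t + 2 * Real.pi * Complex.I by ring,
      Complex.exp_add, Complex.exp_two_pi_mul_I, mul_one]
  -- h(t+1) - h t is an integer multiple of 2π
  have hper : ∀ t : ℝ, ∃ k : ℤ, h (t + 1) = h t + k * (2 * Real.pi) := by
    intro t
    have e1 : Complex.exp (Complex.I * h (t + 1)) = Complex.exp (Complex.I * h t) := by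
      rw [← hval, ← hval]
      congr 1
      push_cast
      exact hexp1 t
    have e2 : Complex.exp (Complex.I * h (t + 1) - Complex.I * h t) = 1 := by
      rw [Complex.exp_sub, e1, div_self (Complex.exp_ne_zero _)]
    rw [Complex.exp_eq_one_iff] at e2
    obtain ⟨k, hk⟩ := e2
    refine ⟨k, ?_⟩
    have h2 : ((h (t + 1) - h t : ℝ) : ℂ) = ((k * (2 * Real.pi) : ℝ) : ℂ) := by
      apply mul_left_cancel₀ Complex.I_ne_zero
      push_cast
      rw [mul_sub]
      rw [hk]
      ring
    have := Complex.ofReal_injective h2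
    linarith
  -- the integer is constant
  classical
  set m : ℝ → ℤ := fun t => Classical.choose (hper t) with hm
  have hmspec : ∀ t, h (t + 1) = h t + m t * (2 * Real.pi) := fun t =>
    Classical.choose_spec (hper t)
  have hmcont : Continuous fun t => m t := by
    rw [Int.isClosedEmbedding_coe_real.isEmbedding.continuous_iff]
    have : (fun t => ((m t : ℝ))) = fun t => (h (t + 1) - h t) / (2 * Real.pi) := by
      funext t
      have := hmspec t
      field_simp
      linarith
    rw [Function.comp_def, this]
    fun_prop
  have hmconst : ∀ t, m t = m 0 := by
    intro t
    have hlc : IsLocallyConstant fun t => m t :=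
      (IsLocallyConstant.iff_continuous _).2 hmcont
    exact hlc.apply_eq_of_preconnectedSpace t 0
  have hm0 : (m 0 : ℝ) * (2 * Real.pi) = 2 * Real.pi * (2 * n + 1) := by
    have := hmspec 0
    rw [zero_add] at this
    linarith
  have key : ∀ t : ℝ, h (t + 1) = h t + 2 * Real.pi * (2 * n + 1) := by
    intro t
    have := hmspec t
    rw [hmconst t, hm0] at this
    exact this
  -- shift by integers
  have hshift : ∀ (k : ℤ) (t : ℝ), h (t + k) = h t + k * (2 * Real.pi * (2 * n + 1)) := by
    intro k
    induction k using Int.induction_on with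
    | zero => intro t; simp
    | succ i ih =>
        intro t
        have hk := key (t + i)
        have iht := ih t
        push_cast at iht ⊢
        rw [show t + ((i:ℝ) + 1) = (t + i) + 1 by ring]
        linear_combination hk + iht
    | pred i ih =>
        intro t
        have hk := key (t + (-(i:ℝ) - 1))
        rw [show t + (-(i:ℝ) - 1) + 1 = t + (-(i:ℝ)) by ring] at hk
        have iht := ih t
        push_cast at iht ⊢
        linear_combination iht - hk
  -- behaviour of γ under natural shifts
  have hγnat : ∀ (j : ℕ) (t : ℝ), γ (t + j) = ((γ t).1, (-1 : ℂ) ^ j * (γ t).2) := by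
    intro j
    induction j with
    | zero => intro t; simp
    | succ i ih =>
        intro t
        have e : t + ((i:ℝ) + 1) = (t + i) + 1 := by ring
        push_cast
        rw [e, hγdeck (t + i), ih t]
        simp [pow_succ]
  -- behaviour of γ under integer shifts
  have hγshift : ∀ (k : ℤ) (t : ℝ), γ (t + k) = ((γ t).1, (-1 : ℂ) ^ k * (γ t).2) := by
    intro k t
    rcases le_or_gt 0 k with hk | hk
    · obtain ⟨j, rfl⟩ := Int.eq_ofNat_of_zero_le hk
      have := hγnat j t
      rw [show (((j:ℤ)):ℝ) = (j:ℝ) by push_cast; ring, zpow_natCast]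
      exact this
    · obtain ⟨j, rfl⟩ : ∃ j : ℕ, k = -(j:ℤ) := by
        refine ⟨k.natAbs, ?_⟩
        omega
      have hbase := hγnat j (t - j)
      rw [show t - (j:ℝ) + j = t by ring] at hbase
      have hfst : (γ (t - (j:ℝ))).1 = (γ t).1 := by rw [hbase]
      have hsnd2 : (γ t).2 = (-1:ℂ) ^ j * (γ (t - (j:ℝ))).2 := by rw [hbase]
      have hsnd : (γ (t - (j:ℝ))).2 = (-1:ℂ) ^ (-(j:ℤ)) * (γ t).2 := by
        rw [hsnd2, zpow_neg, zpow_natCast]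
        have hne : ((-1:ℂ) ^ j) ≠ 0 := pow_ne_zero _ (by norm_num)
        field_simp
      have he : t + ((-(j:ℤ) : ℤ) : ℝ) = t - j := by push_cast; ring
      rw [he]
      exact Prod.ext hfst hsnd
  -- second coordinate never vanishes on the boundary
  have hynz : ∀ p ∈ bdrySigma a, p.2 ≠ 0 := by
    intro p hp h0
    obtain ⟨h1, h2⟩ := hp
    rw [h0] at h1
    simp at h1
    have : p.1 = a := by linear_combination -h1
    rw [this] at h2
    rw [h2] at ha'
    linarith
  -- if γ t = γ t' then t' = t + 2m
  have htdiff : ∀ t t' : ℝ, γ t = γ t' → ∃ j : ℤ, t' = t + 2 * j := by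
    intro t t' he
    have hx : Complex.exp (2 * Real.pi * Complex.I * t) = Complex.exp (2 * Real.pi * Complex.I * t') := by
      rw [← hγproj, ← hγproj, he]
    rw [Complex.exp_eq_exp_iff_exists_int] at hx
    obtain ⟨k, hk⟩ := hx
    have hcan : (t : ℂ) = (t' : ℂ) + k := by
      have h2 : 2 * (Real.pi:ℂ) * Complex.I * t = 2 * Real.pi * Complex.I * ((t':ℂ) + k) := by
        rw [hk]; ring
      have hne : (2 * (Real.pi:ℂ) * Complex.I) ≠ 0 := by
        simp [Complex.I_ne_zero, Real.pi_ne_zero]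
      exact mul_left_cancel₀ hne h2
    have htt : t = t' + (k : ℝ) := by
      have : ((t : ℂ)) = (((t' + (k:ℝ)) : ℝ) : ℂ) := by push_cast; exact hcan
      exact_mod_cast this
    -- so t' = t + (-k)
    have he2 : γ t' = ((γ t').1, (-1:ℂ) ^ (k:ℤ) * (γ t').2) := by
      have h3 := hγshift k t'
      rw [← htt] at h3
      conv_lhs => rw [← he, h3]
    have hy : (-1:ℂ) ^ (k:ℤ) * (γ t').2 = (γ t').2 := (congrArg Prod.snd he2).symm
    have hyne := hynz (γ t') (hγS t')
    have hpow : (-1:ℂ) ^ (k:ℤ) = 1 := by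
      have hy2 : ((-1:ℂ) ^ (k:ℤ) - 1) * (γ t').2 = 0 := by linear_combination hy
      rcases mul_eq_zero.1 hy2 with h1 | h1
      · linear_combination h1
      · exact absurd h1 hyne
    have hkeven : Even k := by
      by_contra hodd
      rw [Int.not_even_iff_odd] at hodd
      rw [hodd.neg_one_zpow] at hpow
      norm_num at hpow
    obtain ⟨j, hj⟩ := hkeven
    refine ⟨-j, ?_⟩
    have : (k : ℝ) = 2 * j := by rw [hj]; push_cast; ring
    rw [htt, this]
    push_cast
    ring
  -- well-definedness of the square root along γ
  have hwd : ∀ t t' : ℝ, γ t = γ t' →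
      Complex.exp (Complex.I * h t / 2) = Complex.exp (Complex.I * h t' / 2) := by
    intro t t' he
    obtain ⟨j, hj⟩ := htdiff t t' he
    have hh : h t' = h t + (2 * j) * (2 * Real.pi * (2 * n + 1)) := by
      have := hshift (2 * j) t
      rw [show t + ((2 * j : ℤ) : ℝ) = t + 2 * j by push_cast; ring, ← hj] at this
      rw [this]
      push_cast
      ring
    rw [show Complex.I * (h t' : ℂ) / 2
        = Complex.I * h t / 2 + ((j * (2 * n + 1) : ℤ) : ℂ) * (2 * Real.pi * Complex.I) by
      rw [hh]; push_cast; ring]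
    rw [Complex.exp_add, Complex.exp_int_mul_two_pi_mul_I, mul_one]
  -- surjectivity of γ onto the boundary
  have hsurj : ∀ p ∈ bdrySigma a, ∃ t, γ t = p := by
    intro p hp
    obtain ⟨hy2, hx1⟩ := hp
    set t₀ : ℝ := Complex.arg p.1 / (2 * Real.pi) with ht₀
    have habs : ‖p.1‖ = 1 := by exact hx1
    have hx : (γ t₀).1 = p.1 := by
      rw [hγproj]
      rw [show 2 * (Real.pi:ℂ) * Complex.I * ((t₀:ℝ):ℂ) = (Complex.arg p.1 : ℂ) * Complex.I by
        rw [ht₀]; push_cast; field_simp]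
      have := Complex.norm_mul_exp_arg_mul_I p.1
      rw [habs] at this
      simpa using this
    have hsq : (γ t₀).2 ^ 2 = p.2 ^ 2 := by
      rw [(hγS t₀).1, hx, hy2]
    have : ((γ t₀).2 - p.2) * ((γ t₀).2 + p.2) = 0 := by linear_combination hsq
    rcases mul_eq_zero.1 this with h1 | h1
    · exact ⟨t₀, Prod.ext hx (by linear_combination h1)⟩
    · refine ⟨t₀ + 1, ?_⟩
      rw [hγdeck t₀]
      refine Prod.ext hx ?_
      show -(γ t₀).2 = p.2
      linear_combination -h1
  -- define the square root
  set s : ℂ × ℂ → ℂ := fun p =>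
    if hp : ∃ t, γ t = p then Complex.exp (Complex.I * h (Classical.choose hp) / 2) else 0
    with hs
  have hsγ : ∀ t, s (γ t) = Complex.exp (Complex.I * h t / 2) := by
    intro t
    have hex : ∃ t', γ t' = γ t := ⟨t, rfl⟩
    rw [hs]
    simp only [dif_pos hex]
    exact hwd _ t (Classical.choose_spec hex)
  have hsq : ∀ p ∈ bdrySigma a, (s p) ^ 2 = ψ p.1 := by
    intro p hp
    obtain ⟨t, ht⟩ := hsurj p hp
    rw [← ht, hsγ t]
    rw [← Complex.exp_nat_mul]
    rw [show (2:ℕ) * (Complex.I * h t / 2) = Complex.I * h t by push_cast; ring]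
    rw [← hval t, hγproj t]
  have hanti : ∀ p ∈ bdrySigma a, s (p.1, -p.2) = -s p := by
    intro p hp
    obtain ⟨t, ht⟩ := hsurj p hp
    have h1 : γ (t + 1) = (p.1, -p.2) := by rw [hγdeck t, ht]
    rw [← h1, hsγ (t + 1), ← ht, hsγ t, key t]
    rw [show Complex.I * ((h t + 2 * Real.pi * (2 * n + 1) : ℝ) : ℂ) / 2
        = Complex.I * h t / 2 + ((2 * n + 1 : ℤ) : ℂ) * (Real.pi * Complex.I) by
      push_cast; ring]
    rw [Complex.exp_add, Complex.exp_int_mul, Complex.exp_pi_mul_I]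
    have hodd : Odd (2 * n + 1) := ⟨n, by ring⟩
    rw [hodd.neg_one_zpow]
    ring
  -- continuity
  have hscont : ContinuousOn s (bdrySigma a) := by
    intro p₀ hp₀
    obtain ⟨t₀, ht₀⟩ := hsurj p₀ hp₀
    have hp₀1 : p₀.1 ≠ 0 := by
      intro h0
      have := hp₀.2
      rw [h0] at this
      simp at this
    set τ : ℂ × ℂ → ℝ := fun p => t₀ + Complex.arg (p.1 / p₀.1) / (2 * Real.pi) with hτ
    have hτp₀ : τ p₀ = t₀ := by
      simp only [hτ]
      rw [div_self hp₀1, Complex.arg_one]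
      simp
    have hτcont : ContinuousAt τ p₀ := by
      apply ContinuousAt.add continuousAt_const
      apply ContinuousAt.div_const
      have h1 : ContinuousAt (fun p : ℂ × ℂ => p.1 / p₀.1) p₀ :=
        (continuous_fst.continuousAt).div_const _
      have h2 : ContinuousAt Complex.arg (p₀.1 / p₀.1) := by
        rw [div_self hp₀1]
        exact Complex.continuousAt_arg Complex.one_mem_slitPlane
      exact ContinuousAt.comp (g := Complex.arg) (f := fun p : ℂ × ℂ => p.1 / p₀.1) h2 h1
    have hγτ1 : ∀ p : ℂ × ℂ, ‖p.1‖ = 1 → (γ (τ p)).1 = p.1 := by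
      intro p hp1
      rw [hγproj]
      rw [show 2 * (Real.pi:ℂ) * Complex.I * ((τ p : ℝ) : ℂ)
          = 2 * Real.pi * Complex.I * (t₀ : ℂ) + (Complex.arg (p.1 / p₀.1) : ℂ) * Complex.I by
        simp only [hτ]; push_cast; field_simp]
      rw [Complex.exp_add, ← hγproj t₀, ht₀]
      have habs : ‖p.1 / p₀.1‖ = 1 := by
        rw [norm_div]
        rw [hp1, hp₀.2]
        norm_num
      have := Complex.norm_mul_exp_arg_mul_I (p.1 / p₀.1)
      rw [habs, Complex.ofReal_one, one_mul] at this
      rw [this]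
      field_simp
    set r : ℝ := Real.sqrt (1 - ‖a‖) with hr
    have hrpos : 0 < r := Real.sqrt_pos.2 (by linarith)
    have heq : ∀ p ∈ bdrySigma a, ‖p.2 - (γ (τ p)).2‖ < r →
        s p = Complex.exp (Complex.I * h (τ p) / 2) := by
      intro p hp hclose
      have hx : (γ (τ p)).1 = p.1 := hγτ1 p hp.2
      have hsq2 : (γ (τ p)).2 ^ 2 = p.2 ^ 2 := by
        rw [(hγS (τ p)).1, hx, hp.1]
      have hfac : ((γ (τ p)).2 - p.2) * ((γ (τ p)).2 + p.2) = 0 := by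
        linear_combination hsq2
      have hy : (γ (τ p)).2 = p.2 := by
        rcases mul_eq_zero.1 hfac with h1 | h1
        · linear_combination h1
        · exfalso
          have hyval : (γ (τ p)).2 = -p.2 := by linear_combination h1
          rw [hyval] at hclose
          have hnorm : ‖p.2 - -p.2‖ = 2 * ‖p.2‖ := by
            rw [show p.2 - -p.2 = 2 * p.2 by ring]
            simp [norm_mul]
          rw [hnorm] at hclose
          have hp2 : r ^ 2 ≤ ‖p.2‖ ^ 2 := by
            rw [hr, Real.sq_sqrt (by linarith)]
            have : ‖p.2‖ ^ 2 = ‖p.2 ^ 2‖ := by rw [norm_pow]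
            rw [this, hp.1]
            calc 1 - ‖a‖ ≤ ‖p.1‖ - ‖a‖ := by rw [hp.2]
              _ ≤ ‖p.1 - a‖ := norm_sub_norm_le _ _
          have hle : r ≤ ‖p.2‖ := by
            nlinarith [norm_nonneg p.2]
          linarith
      have hγp : γ (τ p) = p := Prod.ext hx hy
      have hsp : s p = s (γ (τ p)) := by rw [hγp]
      rw [hsp, hsγ]
    apply ContinuousWithinAt.congr_of_eventuallyEq
      (f := fun p => Complex.exp (Complex.I * h (τ p) / 2))
    · apply ContinuousAt.continuousWithinAt
      apply ContinuousAt.cexp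
      apply ContinuousAt.div_const
      apply ContinuousAt.mul continuousAt_const
      exact Complex.continuous_ofReal.continuousAt.comp (hhc.continuousAt.comp hτcont)
    · have hcl : ContinuousAt (fun p : ℂ × ℂ => ‖p.2 - (γ (τ p)).2‖) p₀ := by
        apply ContinuousAt.norm
        apply ContinuousAt.sub continuous_snd.continuousAt
        exact (continuous_snd.continuousAt).comp (hγc.continuousAt.comp hτcont)
      have hval0 : ‖p₀.2 - (γ (τ p₀)).2‖ = 0 := by
        rw [hτp₀, ht₀]
        simp
      have hev : ∀ᶠ p in nhds p₀, ‖p.2 - (γ (τ p)).2‖ < r := by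
        have ht : Filter.Tendsto (fun p : ℂ × ℂ => ‖p.2 - (γ (τ p)).2‖) (nhds p₀) (nhds 0) := by
          simpa only [hval0] using hcl.tendsto
        exact ht.eventually_lt_const hrpos
      filter_upwards [nhdsWithin_le_nhds hev, self_mem_nhdsWithin] with p h1 h2
      exact heq p h2 h1
    · have : ‖p₀.2 - (γ (τ p₀)).2‖ < r := by
        rw [hτp₀, ht₀]
        simpa using hrpos
      exact heq p₀ hp₀ this
  -- norm of s is one
  have hsnorm : ∀ p ∈ bdrySigma a, ‖s p‖ = 1 := by
    intro p hp
    obtain ⟨t, ht⟩ := hsurj p hp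
    rw [← ht, hsγ t, Complex.norm_exp]
    simp
  constructor
  · -- winding number part
    refine ⟨h, hhc, ?_, ?_⟩
    · intro t
      rw [hγproj t, hval t]
    · have h1 := key 0
      have h2 := key 1
      rw [zero_add] at h1
      rw [show (1:ℝ) + 1 = 2 by norm_num] at h2
      push_cast
      linarith
  · refine ⟨s, hscont, hsq, hanti, ?_⟩
    intro Γ hΓ p hp
    have hp1s : p.1 ∈ sphere (0:ℂ) 1 := by
      rw [mem_sphere_zero_iff_norm]
      exact hp.2
    have hsne : s p ≠ 0 := by
      intro h0
      have := hsnorm p hp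
      rw [h0] at this
      simp at this
    have hψne : ψ p.1 ≠ 0 := by
      intro h0
      have := hψ1 p.1 hp1s
      rw [h0] at this
      simp at this
    have hconj : (starRingEnd ℂ) (s p) = (s p)⁻¹ := by
      have hns : Complex.normSq (s p) = 1 := by
        rw [Complex.normSq_eq_norm_sq, hsnorm p hp]
        norm_num
      have h1 : s p * (starRingEnd ℂ) (s p) = 1 := by
        rw [Complex.mul_conj, hns]
        norm_num
      field_simp
      linear_combination h1
    have hcw : (starRingEnd ℂ) (Γ p.1) = (ψ p.1)⁻¹ * Γ p.1 := by
      have := hΓ p.1 hp1s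
      field_simp
      linear_combination -this
    constructor
    · rw [← Complex.conj_eq_iff_im]
      rw [map_mul, map_inv₀, hconj, hcw, inv_inv, ← hsq p hp]
      field_simp
    · rw [hanti p hp, inv_neg]
      ring
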